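/- Let (x, y) be jointly Gaussian real random variables with x ~ N(0,1), y ~ N(0,1), and E[xy] = ρ, and let w be a random variable uniformly distributed on (0, 2π), independent of (x, y). Then for every real t, E[cos(t x + w) cos(t y + w)] = (1/2) e^{-t²(1-ρ)}. In particular, with t = √γ for γ ≥ 0, the quantity 2·E[cos(√γ x + w) cos(√γ y + w)] equals the RBF kernel value e^{-γ(1-ρ)}. -/

import Mathlib

open MeasureTheory ProbabilityTheory Real

/-- The bivariate Gaussian distribution on `ℝ × ℝ` with standard normal marginals
and correlation `ρ ∈ [-1, 1]`: the law of `(z₁, ρ z₁ + √(1-ρ²) z₂)` where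
`z₁, z₂` are i.i.d. standard normal. -/
noncomputable def biGaussian (ρ : ℝ) : Measure (ℝ × ℝ) :=
  Measure.map (fun z : ℝ × ℝ => (z.1, ρ * z.1 + Real.sqrt (1 - ρ ^ 2) * z.2))
    ((gaussianReal 0 1).prod (gaussianReal 0 1))

/-- The uniform distribution on the interval `(0, 2π)`. -/
noncomputable def unifTwoPi : Measure ℝ :=
  (ENNReal.ofReal (2 * Real.pi))⁻¹ • volume.restrict (Set.Ioo 0 (2 * Real.pi))

section Aux

open Complex
open scoped ENNReal NNReal

private lemma gauss_cos_sin (c : ℝ) :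
    (∫ x : ℝ, Real.cos (c * x) * Real.exp (-(1/2) * x ^ 2))
      = Real.sqrt (2 * π) * Real.exp (-(1/2) * c ^ 2) ∧
    (∫ x : ℝ, Real.sin (c * x) * Real.exp (-(1/2) * x ^ 2)) = 0 := by
  have hb : (0:ℝ) < (1/2 : ℂ).re := by norm_num
  have h := fourierIntegral_gaussian hb (c : ℂ)
  have hint : Integrable (fun x : ℝ => Real.exp (-(1/2) * x ^ 2)) := by
    simpa using integrable_exp_neg_mul_sq (by norm_num : (0:ℝ) < 1/2)
  have hintc : Integrable (fun x : ℝ => Real.cos (c * x) * Real.exp (-(1/2) * x ^ 2)) := by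
    apply hint.bdd_mul
    · exact (Real.continuous_cos.comp (continuous_const.mul continuous_id)).aestronglyMeasurable
    · exact ae_of_all _ fun x => (by simpa using Real.abs_cos_le_one (c * x) : ‖Real.cos (c * x)‖ ≤ 1)
  have hints : Integrable (fun x : ℝ => Real.sin (c * x) * Real.exp (-(1/2) * x ^ 2)) := by
    apply hint.bdd_mul
    · exact (Real.continuous_sin.comp (continuous_const.mul continuous_id)).aestronglyMeasurable
    · exact ae_of_all _ fun x => (by simpa using Real.abs_sin_le_one (c * x) : ‖Real.sin (c * x)‖ ≤ 1)
  have hlhs : ∀ x : ℝ, cexp (I * (c:ℂ) * (x:ℝ)) * cexp (-(1/2 : ℂ) * (x:ℝ) ^ 2)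
      = ((Real.cos (c * x) * Real.exp (-(1/2) * x ^ 2) : ℝ) : ℂ)
        + ((Real.sin (c * x) * Real.exp (-(1/2) * x ^ 2) : ℝ) : ℂ) * I := by
    intro x
    rw [show I * (c:ℂ) * (x:ℝ) = ((c * x : ℝ) : ℂ) * I by push_cast; ring,
      Complex.exp_mul_I, show (-(1/2 : ℂ) * (x:ℝ) ^ 2) = ((-(1/2) * x ^ 2 : ℝ) : ℂ) by push_cast; ring,
      ← Complex.ofReal_exp, ← Complex.ofReal_cos, ← Complex.ofReal_sin]
    push_cast
    ring
  rw [show (∫ x : ℝ, cexp (I * (c:ℂ) * (x:ℝ)) * cexp (-(1/2 : ℂ) * (x:ℝ) ^ 2))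
      = ∫ x : ℝ, (((Real.cos (c * x) * Real.exp (-(1/2) * x ^ 2) : ℝ) : ℂ)
        + ((Real.sin (c * x) * Real.exp (-(1/2) * x ^ 2) : ℝ) : ℂ) * I) from
    integral_congr_ae (Filter.Eventually.of_forall hlhs)] at h
  have h1 : Integrable (fun x : ℝ => ((Real.cos (c * x) * Real.exp (-(1/2) * x ^ 2) : ℝ) : ℂ)) :=
    hintc.ofReal
  have h2 : Integrable (fun x : ℝ =>
      ((Real.sin (c * x) * Real.exp (-(1/2) * x ^ 2) : ℝ) : ℂ) * I) :=
    hints.ofReal.mul_const I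
  have e1 : (∫ a : ℝ, ((Real.cos (c * a) * Real.exp (-(1/2) * a ^ 2) : ℝ) : ℂ))
      = (((∫ a : ℝ, Real.cos (c * a) * Real.exp (-(1/2) * a ^ 2)) : ℝ) : ℂ) := integral_ofReal
  have e2 : (∫ a : ℝ, ((Real.sin (c * a) * Real.exp (-(1/2) * a ^ 2) : ℝ) : ℂ))
      = (((∫ a : ℝ, Real.sin (c * a) * Real.exp (-(1/2) * a ^ 2)) : ℝ) : ℂ) := integral_ofReal
  rw [integral_add h1 h2, integral_mul_const, e1, e2] at h
  have hrhs : ((π : ℂ) / (1/2)) ^ (1/2 : ℂ) * cexp (-(c:ℂ) ^ 2 / (4 * (1/2)))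
      = ((Real.sqrt (2 * π) * Real.exp (-(1/2) * c ^ 2) : ℝ) : ℂ) := by
    rw [show ((π : ℂ) / (1/2)) = ((2 * π : ℝ) : ℂ) by push_cast; ring,
      show (-(c:ℂ) ^ 2 / (4 * (1/2))) = ((-(1/2) * c ^ 2 : ℝ) : ℂ) by push_cast; ring,
      ← Complex.ofReal_exp,
      show (1/2 : ℂ) = ((1/2 : ℝ) : ℂ) by norm_num,
      ← Complex.ofReal_cpow (by positivity : (0:ℝ) ≤ 2 * π),
      ← Real.sqrt_eq_rpow, ← Complex.ofReal_mul]
  rw [hrhs] at h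
  constructor
  · have := congrArg Complex.re h
    simpa [-Complex.ofReal_exp] using this
  · have := congrArg Complex.im h
    simpa [-Complex.ofReal_exp] using this

private lemma gauss_cos_add (θ c : ℝ) :
    ∫ x : ℝ, Real.cos (θ + c * x) ∂(gaussianReal 0 1)
      = Real.exp (-(1/2) * c ^ 2) * Real.cos θ := by
  rw [gaussianReal_of_var_ne_zero 0 one_ne_zero]
  rw [show gaussianPDF 0 1 = fun x => ((gaussianPDFReal 0 1 x).toNNReal : ℝ≥0∞) from rfl]
  rw [integral_withDensity_eq_integral_smul
    ((measurable_gaussianPDFReal 0 1).real_toNNReal) _]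
  have hpdf : ∀ x : ℝ, (gaussianPDFReal 0 1 x).toNNReal • Real.cos (θ + c * x)
      = (Real.sqrt (2 * π))⁻¹ *
        (Real.cos θ * (Real.cos (c * x) * Real.exp (-(1/2) * x ^ 2))
          - Real.sin θ * (Real.sin (c * x) * Real.exp (-(1/2) * x ^ 2))) := by
    intro x
    rw [NNReal.smul_def, smul_eq_mul, Real.coe_toNNReal _ (gaussianPDFReal_nonneg 0 1 x)]
    unfold gaussianPDFReal
    rw [Real.cos_add]
    push_cast
    ring_nf
  simp_rw [hpdf]
  have h1 := (gauss_cos_sin c).1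
  have h2 := (gauss_cos_sin c).2
  have hint : Integrable (fun x : ℝ => Real.exp (-(1/2) * x ^ 2)) := by
    simpa using integrable_exp_neg_mul_sq (by norm_num : (0:ℝ) < 1/2)
  have hintc : Integrable (fun x : ℝ => Real.cos (c * x) * Real.exp (-(1/2) * x ^ 2)) := by
    apply hint.bdd_mul
    · exact (Real.continuous_cos.comp (continuous_const.mul continuous_id)).aestronglyMeasurable
    · exact ae_of_all _ fun x => (by simpa using Real.abs_cos_le_one (c * x) : ‖Real.cos (c * x)‖ ≤ 1)
  have hints : Integrable (fun x : ℝ => Real.sin (c * x) * Real.exp (-(1/2) * x ^ 2)) := by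
    apply hint.bdd_mul
    · exact (Real.continuous_sin.comp (continuous_const.mul continuous_id)).aestronglyMeasurable
    · exact ae_of_all _ fun x => (by simpa using Real.abs_sin_le_one (c * x) : ‖Real.sin (c * x)‖ ≤ 1)
  rw [integral_const_mul, integral_sub ((hintc.const_mul _)) ((hints.const_mul _)),
    integral_const_mul, integral_const_mul, h1, h2]
  have hs : Real.sqrt (2 * π) ≠ 0 := by positivity
  field_simp
  ring

private lemma unif_cos_mul (a b : ℝ) :
    ∫ w, Real.cos (a + w) * Real.cos (b + w) ∂unifTwoPi
      = (1/2) * Real.cos (a - b) := by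
  rw [unifTwoPi, integral_smul_measure]
  have h2pi : (0:ℝ) < 2 * π := by positivity
  have htoReal : ((ENNReal.ofReal (2 * π))⁻¹).toReal = (2 * π)⁻¹ := by
    rw [ENNReal.toReal_inv, ENNReal.toReal_ofReal h2pi.le]
  rw [htoReal]
  have hIoo : ∫ w in Set.Ioo 0 (2 * π), Real.cos (a + w) * Real.cos (b + w)
      = ∫ w in (0)..(2 * π), Real.cos (a + w) * Real.cos (b + w) := by
    rw [intervalIntegral.integral_of_le h2pi.le, integral_Ioc_eq_integral_Ioo]
  rw [hIoo]
  have hkey : ∫ w in (0)..(2 * π), Real.cos (a + w) * Real.cos (b + w)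
      = π * Real.cos (a - b) := by
    have hpt : ∀ w : ℝ, Real.cos (a + w) * Real.cos (b + w)
        = (1/2) * Real.cos (a - b) + (1/2) * Real.cos ((a + b) + 2 * w) := by
      intro w
      rw [Real.cos_add a w, Real.cos_add b w, Real.cos_sub, Real.cos_add (a+b) (2*w),
        Real.cos_two_mul, Real.sin_two_mul, Real.cos_add a b, Real.sin_add a b]
      linear_combination (Real.sin a * Real.sin b) * (Real.sin_sq_add_cos_sq w)
    simp_rw [hpt]
    have hF : ∀ w : ℝ, HasDerivAt (fun w => Real.sin ((a + b) + 2 * w) / 4)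
        ((1/2) * Real.cos ((a + b) + 2 * w)) w := by
      intro w
      have h1 : HasDerivAt (fun w : ℝ => (a + b) + 2 * w) 2 w := by
        simpa using ((hasDerivAt_id w).const_mul 2).const_add (a + b)
      have := (h1.sin).div_const 4
      refine this.congr_deriv ?_
      ring
    rw [intervalIntegral.integral_add (by apply Continuous.intervalIntegrable; fun_prop)
        (by apply Continuous.intervalIntegrable; fun_prop),
      intervalIntegral.integral_const,
      intervalIntegral.integral_eq_sub_of_hasDerivAt (fun w _ => hF w)
        (by apply Continuous.intervalIntegrable; fun_prop)]
    rw [show (a + b) + 2 * (2 * π) = ((a + b) + 2 * 0 + 2 * π) + 2 * π by ring,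
      Real.sin_add_two_pi, Real.sin_add_two_pi]
    simp
    ring
  rw [hkey, smul_eq_mul]
  field_simp

instance biGaussian_isProbabilityMeasure (ρ : ℝ) : IsProbabilityMeasure (biGaussian ρ) := by
  rw [biGaussian]
  exact Measure.isProbabilityMeasure_map (by fun_prop)

instance unifTwoPi_isProbabilityMeasure : IsProbabilityMeasure unifTwoPi := by
  constructor
  rw [unifTwoPi, Measure.smul_apply, Measure.restrict_apply MeasurableSet.univ,
    Set.univ_inter, Real.volume_Ioo, smul_eq_mul, sub_zero]
  exact ENNReal.inv_mul_cancel (ne_of_gt (ENNReal.ofReal_pos.mpr (by positivity)))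
    ENNReal.ofReal_ne_top

end Aux

/-- Let `(x, y)` be jointly Gaussian with `x ~ N(0,1)`, `y ~ N(0,1)` and
`E[x y] = ρ`, and let `w` be uniform on `(0, 2π)` and independent of `(x, y)`
(i.e. the joint law of `((x, y), w)` is the product of the bivariate Gaussian
with standard marginals and correlation `ρ` with the uniform law on `(0, 2π)`).
Then for every real `t`, `E[cos(t x + w) cos(t y + w)] = (1/2) e^{-t²(1-ρ)}`;
in particular, for `t = √γ` with `γ ≥ 0`,
`2 E[cos(√γ x + w) cos(√γ y + w)]` equals the RBF kernel value `e^{-γ(1-ρ)}`. -/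
theorem integral_cos_add_unif_mul_cos_add_unif_of_biGaussian
    {Ω : Type*} [MeasurableSpace Ω] (P : Measure Ω) [IsProbabilityMeasure P]
    (X Y W : Ω → ℝ) {ρ : ℝ} (hρ : ρ ∈ Set.Icc (-1 : ℝ) 1)
    (hXYW : Measure.map (fun ω => ((X ω, Y ω), W ω)) P
      = (biGaussian ρ).prod unifTwoPi) :
    (∀ t : ℝ, ∫ ω, Real.cos (t * X ω + W ω) * Real.cos (t * Y ω + W ω) ∂P
        = (1 / 2) * Real.exp (-(t ^ 2) * (1 - ρ))) ∧
    (∀ γ : ℝ, 0 ≤ γ →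
      2 * ∫ ω, Real.cos (Real.sqrt γ * X ω + W ω)
            * Real.cos (Real.sqrt γ * Y ω + W ω) ∂P
        = Real.exp (-γ * (1 - ρ))) := by
  set s : ℝ := Real.sqrt (1 - ρ ^ 2) with hs_def
  have hs2 : s ^ 2 = 1 - ρ ^ 2 := Real.sq_sqrt (by nlinarith [hρ.1, hρ.2])
  have key : ∀ t : ℝ, ∫ ω, Real.cos (t * X ω + W ω) * Real.cos (t * Y ω + W ω) ∂P
      = (1 / 2) * Real.exp (-(t ^ 2) * (1 - ρ)) := by
    intro t
    have hTmeas : AEMeasurable (fun ω => ((X ω, Y ω), W ω)) P :=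
      aemeasurable_of_map_neZero (by rw [hXYW]; infer_instance)
    have hfcont : Continuous (fun p : (ℝ × ℝ) × ℝ =>
        Real.cos (t * p.1.1 + p.2) * Real.cos (t * p.1.2 + p.2)) := by fun_prop
    have h0 : ∫ ω, Real.cos (t * X ω + W ω) * Real.cos (t * Y ω + W ω) ∂P
        = ∫ p : (ℝ × ℝ) × ℝ, Real.cos (t * p.1.1 + p.2) * Real.cos (t * p.1.2 + p.2)
            ∂((biGaussian ρ).prod unifTwoPi) := by
      rw [← hXYW, integral_map hTmeas hfcont.aestronglyMeasurable]
    rw [h0]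
    have hint1 : Integrable (fun p : (ℝ × ℝ) × ℝ =>
        Real.cos (t * p.1.1 + p.2) * Real.cos (t * p.1.2 + p.2))
        ((biGaussian ρ).prod unifTwoPi) := by
      refine (integrable_const (1:ℝ)).mono' hfcont.aestronglyMeasurable (ae_of_all _ ?_)
      intro p
      rw [Real.norm_eq_abs, abs_mul]
      exact mul_le_one₀ (Real.abs_cos_le_one _) (abs_nonneg _) (Real.abs_cos_le_one _)
    rw [MeasureTheory.integral_prod _ hint1]
    simp_rw [unif_cos_mul]
    rw [MeasureTheory.integral_const_mul]
    have hφ : Measurable (fun z : ℝ × ℝ => (z.1, ρ * z.1 + s * z.2)) := by fun_prop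
    have hgcont : Continuous (fun p : ℝ × ℝ => Real.cos (t * p.1 - t * p.2)) := by fun_prop
    have h1 : ∫ p : ℝ × ℝ, Real.cos (t * p.1 - t * p.2) ∂(biGaussian ρ)
        = ∫ z : ℝ × ℝ, Real.cos (t * z.1 - t * (ρ * z.1 + s * z.2))
            ∂((gaussianReal 0 1).prod (gaussianReal 0 1)) := by
      rw [biGaussian, integral_map hφ.aemeasurable hgcont.aestronglyMeasurable]
    rw [h1]
    have harg : ∀ z : ℝ × ℝ, Real.cos (t * z.1 - t * (ρ * z.1 + s * z.2))
        = Real.cos ((t * (1 - ρ)) * z.1 + (-(t * s)) * z.2) := by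
      intro z
      congr 1
      ring
    simp_rw [harg]
    have hint2 : Integrable (fun z : ℝ × ℝ =>
        Real.cos ((t * (1 - ρ)) * z.1 + (-(t * s)) * z.2))
        ((gaussianReal 0 1).prod (gaussianReal 0 1)) := by
      refine (integrable_const (1:ℝ)).mono'
        (Continuous.aestronglyMeasurable (by fun_prop)) (ae_of_all _ ?_)
      intro z
      rw [Real.norm_eq_abs]
      exact Real.abs_cos_le_one _
    rw [MeasureTheory.integral_prod _ hint2]
    simp_rw [gauss_cos_add]
    rw [MeasureTheory.integral_const_mul]
    have h2 : ∫ z1 : ℝ, Real.cos ((t * (1 - ρ)) * z1) ∂(gaussianReal 0 1)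
        = Real.exp (-(1/2) * (t * (1 - ρ)) ^ 2) := by
      have := gauss_cos_add 0 (t * (1 - ρ))
      simpa using this
    rw [h2, ← Real.exp_add]
    have hexp : -(1/2) * (-(t * s)) ^ 2 + -(1/2) * (t * (1 - ρ)) ^ 2 = -(t ^ 2) * (1 - ρ) := by
      linear_combination (-(1/2) * t ^ 2) * hs2
    rw [hexp]
  refine ⟨key, fun γ hγ => ?_⟩
  rw [key (Real.sqrt γ), Real.sq_sqrt hγ]
  ring
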